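/- Every locally Dirac graph of order n ≥ 8 is non-planar. -/

import Mathlib

noncomputable def locDeg {V : Type*} (G : SimpleGraph V) (v u : V) : ℕ :=
  (G.neighborSet v ∩ G.neighborSet u).ncard

noncomputable def degN {V : Type*} (G : SimpleGraph V) (v : V) : ℕ :=
  (G.neighborSet v).ncard

def LocallyDirac {V : Type*} (G : SimpleGraph V) : Prop :=
  ∀ v u : V, G.Adj v u → degN G v ≤ 2 * locDeg G v u

/-- `H` is a minor of `G`, witnessed by disjoint nonempty connected branch sets. -/
def HasMinor {V : Type*} {W : Type*} (G : SimpleGraph V) (H : SimpleGraph W) : Prop :=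
  ∃ B : W → Set V,
    (∀ w, (B w).Nonempty) ∧
    (∀ w, (G.induce (B w)).Connected) ∧
    (∀ w₁ w₂, w₁ ≠ w₂ → Disjoint (B w₁) (B w₂)) ∧
    (∀ w₁ w₂, H.Adj w₁ w₂ → ∃ a ∈ B w₁, ∃ b ∈ B w₂, G.Adj a b)

/-- Planarity, via the Kuratowski–Wagner characterization: a graph is planar iff it has
neither a `K₅` nor a `K₃,₃` minor. -/
def Planar {V : Type*} (G : SimpleGraph V) : Prop :=
  ¬ HasMinor G (SimpleGraph.completeGraph (Fin 5)) ∧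
  ¬ HasMinor G (completeBipartiteGraph (Fin 3) (Fin 3))


open Set SimpleGraph
set_option linter.unusedSectionVars false
set_option maxHeartbeats 1600000

section locdirac_aux
variable {V : Type*} [Fintype V] {G : SimpleGraph V}

lemma closed_mem (hc : G.Connected) {S : Set V} (hs : S.Nonempty)
    (hcl : ∀ x ∈ S, ∀ y, G.Adj x y → y ∈ S) : ∀ y, y ∈ S := by
  intro y
  obtain ⟨s, hsS⟩ := hs
  obtain ⟨w⟩ := hc.preconnected s y
  clear hc
  induction w with
  | nil => exact hsS
  | cons h p ih => exact ih (hcl _ hsS _ h)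

lemma card_V_le (hc : G.Connected) {S : Set V} (hs : S.Nonempty)
    (hcl : ∀ x ∈ S, ∀ y, G.Adj x y → y ∈ S) : Fintype.card V ≤ S.ncard := by
  have h1 : S = Set.univ := Set.eq_univ_iff_forall.2 (closed_mem hc hs hcl)
  rw [h1, Set.ncard_univ, Nat.card_eq_fintype_card]

lemma ncard3' {a b c : V} (h1 : a ≠ b) (h2 : a ≠ c) (h3 : b ≠ c) :
    ({a, b, c} : Set V).ncard = 3 := by
  rw [Set.ncard_eq_three]; exact ⟨a, b, c, h1, h2, h3, rfl⟩

lemma ncard4' {a b c d : V} (h1 : a ≠ b) (h2 : a ≠ c) (h3 : a ≠ d) (h4 : b ≠ c)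
    (h5 : b ≠ d) (h6 : c ≠ d) : ({a, b, c, d} : Set V).ncard = 4 := by
  have : a ∉ ({b, c, d} : Set V) := by simp [h1, h2, h3]
  rw [show ({a,b,c,d} : Set V) = insert a {b,c,d} from rfl,
    Set.ncard_insert_of_notMem this, ncard3' h4 h5 h6]

lemma exists_fourth {s : Set V} {a b c : V} (hs : s.ncard = 4) (ha : a ∈ s) (hb : b ∈ s)
    (hc : c ∈ s) (hab : a ≠ b) (hac : a ≠ c) (hbc : b ≠ c) :
    ∃ t, t ∉ ({a, b, c} : Set V) ∧ s = {a, b, c, t} := by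
  have hsub : ({a, b, c} : Set V) ⊆ s := by
    intro x hx; rcases hx with rfl | rfl | rfl <;> assumption
  have hdc : (s \ {a, b, c}).ncard = 1 := by
    rw [Set.ncard_diff hsub, hs, ncard3' hab hac hbc]
  obtain ⟨t, ht⟩ := Set.ncard_eq_one.1 hdc
  have htmem : t ∈ s \ ({a,b,c} : Set V) := ht ▸ rfl
  refine ⟨t, htmem.2, ?_⟩
  have := Set.union_diff_cancel hsub
  rw [ht] at this
  rw [← this]; ext x; simp; tauto

lemma eq_four {s : Set V} {a b c d : V} (hs : s.ncard ≤ 4) (h1 : a ≠ b) (h2 : a ≠ c)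
    (h3 : a ≠ d) (h4 : b ≠ c) (h5 : b ≠ d) (h6 : c ≠ d)
    (ha : a ∈ s) (hb : b ∈ s) (hc : c ∈ s) (hd : d ∈ s) : s = {a, b, c, d} := by
  have hsub : ({a, b, c, d} : Set V) ⊆ s := by
    intro x hx; rcases hx with rfl | rfl | rfl | rfl <;> assumption
  exact (Set.eq_of_subset_of_ncard_le hsub
    (by rw [ncard4' h1 h2 h3 h4 h5 h6]; exact hs) (Set.toFinite s)).symm

lemma eq_three {s : Set V} {a b c : V} (hs : s.ncard ≤ 3) (h1 : a ≠ b) (h2 : a ≠ c)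
    (h3 : b ≠ c) (ha : a ∈ s) (hb : b ∈ s) (hc : c ∈ s) : s = {a, b, c} := by
  have hsub : ({a, b, c} : Set V) ⊆ s := by
    intro x hx; rcases hx with rfl | rfl | rfl <;> assumption
  exact (Set.eq_of_subset_of_ncard_le hsub
    (by rw [ncard3' h1 h2 h3]; exact hs) (Set.toFinite s)).symm

lemma eq_two {s : Set V} {a b : V} (hs : s.ncard ≤ 2) (h1 : a ≠ b)
    (ha : a ∈ s) (hb : b ∈ s) : s = {a, b} := by
  have hsub : ({a, b} : Set V) ⊆ s := by
    intro x hx; rcases hx with rfl | rfl <;> assumption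
  exact (Set.eq_of_subset_of_ncard_le hsub
    (by rw [Set.ncard_pair h1]; exact hs) (Set.toFinite s)).symm

lemma ncard_le3 (a b c : V) : ({a,b,c} : Set V).ncard ≤ 3 := by
  calc ({a,b,c} : Set V).ncard ≤ ({b,c} : Set V).ncard + 1 := Set.ncard_insert_le _ _
    _ ≤ (({c} : Set V).ncard + 1) + 1 := by gcongr; exact Set.ncard_insert_le _ _
    _ ≤ 3 := by rw [Set.ncard_singleton]

lemma ncard_le4 (a b c d : V) : ({a,b,c,d} : Set V).ncard ≤ 4 := by
  calc ({a,b,c,d} : Set V).ncard ≤ ({b,c,d} : Set V).ncard + 1 := Set.ncard_insert_le _ _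
    _ ≤ 4 := by have := ncard_le3 b c d; omega

lemma ncard_le5 (a b c d e : V) : ({a,b,c,d,e} : Set V).ncard ≤ 5 := by
  calc ({a,b,c,d,e} : Set V).ncard ≤ ({b,c,d,e} : Set V).ncard + 1 := Set.ncard_insert_le _ _
    _ ≤ 5 := by have := ncard_le4 b c d e; omega

lemma ncard_le6 (a b c d e f : V) : ({a,b,c,d,e,f} : Set V).ncard ≤ 6 := by
  calc ({a,b,c,d,e,f} : Set V).ncard ≤ ({b,c,d,e,f} : Set V).ncard + 1 := Set.ncard_insert_le _ _
    _ ≤ 6 := by have := ncard_le5 b c d e f; omega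

lemma two_of_ncard {s : Set V} (h : 2 ≤ s.ncard) : ∃ a ∈ s, ∃ b ∈ s, a ≠ b :=
  (Set.one_lt_ncard (s.toFinite)).1 (by omega)

lemma one_of_ncard {s : Set V} (h : 1 ≤ s.ncard) : ∃ a, a ∈ s := by
  have : s.Nonempty := Set.nonempty_of_ncard_ne_zero (by omega)
  exact this

-- every vertex has a neighbor

lemma exists_adj (hc : G.Connected) (h8 : 8 ≤ Fintype.card V) (v : V) : ∃ u, G.Adj v u := by
  have h2 : 1 < Fintype.card V := by omega
  obtain ⟨w, hw⟩ := Fintype.exists_ne_of_one_lt_card h2 v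
  obtain ⟨p⟩ := hc.preconnected v w
  cases p with
  | nil => exact absurd rfl hw.symm
  | cons h _ => exact ⟨_, h⟩

lemma deg_not_one (hd : LocallyDirac G) (u : V) : degN G u ≠ 1 := by
  intro h1
  obtain ⟨w, hw⟩ := Set.ncard_eq_one.1 h1
  have hA : G.Adj u w := by
    rw [← SimpleGraph.mem_neighborSet, hw]; rfl
  have key := hd u w hA
  have hempty : G.neighborSet u ∩ G.neighborSet w = ∅ := by
    ext x
    simp only [Set.mem_inter_iff, SimpleGraph.mem_neighborSet, Set.mem_empty_iff_false,
      iff_false, not_and]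
    intro hx
    have : x = w := by have : x ∈ G.neighborSet u := hx; rwa [hw, Set.mem_singleton_iff] at this
    subst this
    exact fun h => G.irrefl h
  have key' : (G.neighborSet u).ncard ≤ 2 * (G.neighborSet u ∩ G.neighborSet w).ncard := key
  rw [hempty, Set.ncard_empty] at key'
  have h1' : (G.neighborSet u).ncard = 1 := h1
  omega

lemma deg_not_two (hd : LocallyDirac G) (hc : G.Connected) (h8 : 8 ≤ Fintype.card V)
    (u : V) : degN G u ≠ 2 := by
  intro h2
  obtain ⟨a, b, hab, hNu⟩ := Set.ncard_eq_two.1 h2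
  have hua : G.Adj u a := by rw [← SimpleGraph.mem_neighborSet, hNu]; simp
  have hub : G.Adj u b := by rw [← SimpleGraph.mem_neighborSet, hNu]; simp
  -- common neighbor of u,a must be b
  have key : (G.neighborSet u).ncard ≤ 2 * (G.neighborSet u ∩ G.neighborSet a).ncard := hd u a hua
  have h2' : (G.neighborSet u).ncard = 2 := h2
  obtain ⟨w, hw⟩ := one_of_ncard (by omega : 1 ≤ (G.neighborSet u ∩ G.neighborSet a).ncard)
  have hwu : w ∈ G.neighborSet u := hw.1
  have hwa : G.Adj a w := hw.2
  have hwb : w = b := by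
    rw [hNu] at hwu
    rcases hwu with rfl | rfl
    · exact absurd hwa (G.irrefl)
    · rfl
  have hab' : G.Adj a b := hwb ▸ hwa
  have hub' : u ≠ b := fun h => G.irrefl (h ▸ hub)
  have hua' : u ≠ a := fun h => G.irrefl (h ▸ hua)
  -- degN a ≤ 2
  have hinta : G.neighborSet a ∩ G.neighborSet u ⊆ {b} := by
    intro x hx
    have hxu : x ∈ G.neighborSet u := hx.2
    rw [hNu] at hxu
    rcases hxu with rfl | rfl
    · exact absurd hx.1 (by simp)
    · rfl
  have hdega : (G.neighborSet a).ncard ≤ 2 := by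
    have h : (G.neighborSet a).ncard ≤ 2 * (G.neighborSet a ∩ G.neighborSet u).ncard :=
      hd a u hua.symm
    have hle : (G.neighborSet a ∩ G.neighborSet u).ncard ≤ 1 := by
      have := Set.ncard_le_ncard hinta (Set.toFinite _)
      simpa using this
    omega
  have hNa : G.neighborSet a = {u, b} :=
    eq_two hdega hub' (by simpa using hua.symm) (by simpa using hab')
  -- degN b ≤ 2 similarly
  have hintb : G.neighborSet b ∩ G.neighborSet u ⊆ {a} := by
    intro x hx
    have hxu : x ∈ G.neighborSet u := hx.2
    rw [hNu] at hxu
    rcases hxu with rfl | rfl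
    · rfl
    · exact absurd hx.1 (by simp)
  have hdegb : (G.neighborSet b).ncard ≤ 2 := by
    have h : (G.neighborSet b).ncard ≤ 2 * (G.neighborSet b ∩ G.neighborSet u).ncard :=
      hd b u hub.symm
    have hle : (G.neighborSet b ∩ G.neighborSet u).ncard ≤ 1 := by
      have := Set.ncard_le_ncard hintb (Set.toFinite _)
      simpa using this
    omega
  have hNb : G.neighborSet b = {u, a} :=
    eq_two hdegb hua' (by simpa using hub.symm) (by simpa using hab'.symm)
  -- closure
  have hcl : ∀ x ∈ ({u, a, b} : Set V), ∀ y, G.Adj x y → y ∈ ({u, a, b} : Set V) := by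
    rintro x (rfl | rfl | rfl) y hy
    · have : y ∈ G.neighborSet x := hy
      rw [hNu] at this; rcases this with rfl | rfl <;> simp
    · have : y ∈ G.neighborSet x := hy
      rw [hNa] at this; rcases this with rfl | rfl <;> simp
    · have : y ∈ G.neighborSet x := hy
      rw [hNb] at this; rcases this with rfl | rfl <;> simp
  have := card_V_le hc ⟨u, by simp⟩ hcl
  have := ncard_le3 u a b
  omega

lemma connected_induce_singleton (a : V) : (G.induce ({a} : Set V)).Connected := by
  haveI : Nonempty ({a} : Set V) := ⟨⟨a, rfl⟩⟩
  constructor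
  intro x y
  have : x = y := Subtype.ext (x.2.trans y.2.symm)
  rw [this]

lemma connected_induce_pair {a b : V} (hab : G.Adj a b) :
    (G.induce ({a, b} : Set V)).Connected := by
  haveI : Nonempty ({a, b} : Set V) := ⟨⟨a, by simp⟩⟩
  constructor
  rintro ⟨x, hx⟩ ⟨y, hy⟩
  have key : ∀ z (hz : z ∈ ({a,b} : Set V)),
      (G.induce ({a,b} : Set V)).Reachable ⟨a, by simp⟩ ⟨z, hz⟩ := by
    rintro z (rfl | rfl)
    · rfl
    · exact Adj.reachable (by simpa using hab)
  exact ((key x hx).symm).trans (key y hy)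

lemma ncard_le2 {s : Set V} {a b : V} (h : s ⊆ {a, b}) : s.ncard ≤ 2 := by
  have h1 := Set.ncard_le_ncard h (Set.toFinite _)
  have h2 : ({a, b} : Set V).ncard ≤ 2 := by
    have := Set.ncard_insert_le a ({b} : Set V)
    simp at this; omega
  omega

lemma aux3 (hd : LocallyDirac G) (hc : G.Connected) (h8 : 8 ≤ Fintype.card V)
    {u a b c : V} (hNu : G.neighborSet u = {a, b, c})
    (hab : G.Adj a b) (hac : G.Adj a c) (hbc : G.Adj b c)
    (hdega : (G.neighborSet a).ncard = 4) : False := by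
  have hua : G.Adj u a := by rw [← SimpleGraph.mem_neighborSet, hNu]; simp
  have hub : G.Adj u b := by rw [← SimpleGraph.mem_neighborSet, hNu]; simp
  have huc : G.Adj u c := by rw [← SimpleGraph.mem_neighborSet, hNu]; simp
  have hub' : u ≠ b := hub.ne
  have huc' : u ≠ c := huc.ne
  obtain ⟨x, hxne, hNa⟩ := exists_fourth hdega (by simpa using hua.symm)
    (by simpa using hab) (by simpa using hac) hub' huc' hbc.ne
  have hxu : x ≠ u := by intro h; apply hxne; simp [h]
  have hxb : x ≠ b := by intro h; apply hxne; simp [h]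
  have hxc : x ≠ c := by intro h; apply hxne; simp [h]
  have hax : G.Adj a x := by rw [← SimpleGraph.mem_neighborSet, hNa]; simp
  have hxa : x ≠ a := hax.ne'
  have hnux : ¬ G.Adj u x := by
    intro h
    have : x ∈ G.neighborSet u := h
    rw [hNu] at this
    rcases this with h' | h' | h' <;> simp_all
  -- x is adjacent to b and c
  have key : (G.neighborSet a).ncard ≤ 2 * (G.neighborSet a ∩ G.neighborSet x).ncard :=
    hd a x hax
  obtain ⟨w1, hw1, w2, hw2, hww⟩ := two_of_ncard
    (by omega : 2 ≤ (G.neighborSet a ∩ G.neighborSet x).ncard)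
  have hcases : ∀ w ∈ G.neighborSet a ∩ G.neighborSet x, w = b ∨ w = c := by
    rintro w ⟨hwa, hwx⟩
    have hwnx : w ≠ x := fun h => G.irrefl (h ▸ hwx)
    have hwnu : w ≠ u := by
      intro h; subst h; exact hnux (hwx : G.Adj x w).symm
    rw [hNa] at hwa
    rcases hwa with rfl | rfl | rfl | rfl <;> tauto
  have hbcx : b ∈ G.neighborSet x ∧ c ∈ G.neighborSet x := by
    have e1 := hcases w1 hw1; have e2 := hcases w2 hw2
    rcases e1 with rfl | rfl <;> rcases e2 with rfl | rfl
    · exact absurd rfl hww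
    · exact ⟨hw1.2, hw2.2⟩
    · exact ⟨hw2.2, hw1.2⟩
    · exact absurd rfl hww
  have hxb' : G.Adj x b := hbcx.1
  have hxc' : G.Adj x c := hbcx.2
  -- N b = {u, a, c, x}
  have hNbsub : G.neighborSet b ∩ G.neighborSet u ⊆ {a, c} := by
    rintro w ⟨hwb, hwu⟩
    have : w ≠ b := fun h => G.irrefl (h ▸ hwb)
    rw [hNu] at hwu
    rcases hwu with rfl | rfl | rfl <;> tauto
  have hdegb : (G.neighborSet b).ncard ≤ 4 := by
    have h : (G.neighborSet b).ncard ≤ 2 * (G.neighborSet b ∩ G.neighborSet u).ncard := hd b u hub.symm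
    have := ncard_le2 hNbsub
    omega
  have hNb : G.neighborSet b = {u, a, c, x} :=
    eq_four hdegb hua.ne huc' (Ne.symm hxu) hac.ne hxa.symm hxc.symm
      (by simpa using hub.symm) (by simpa using hab.symm) (by simpa using hbc)
      (by simpa using hxb'.symm)
  -- N c = {u, a, b, x}
  have hNcsub : G.neighborSet c ∩ G.neighborSet u ⊆ {a, b} := by
    rintro w ⟨hwc, hwu⟩
    have : w ≠ c := fun h => G.irrefl (h ▸ hwc)
    rw [hNu] at hwu
    rcases hwu with rfl | rfl | rfl <;> tauto
  have hdegc : (G.neighborSet c).ncard ≤ 4 := by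
    have h : (G.neighborSet c).ncard ≤ 2 * (G.neighborSet c ∩ G.neighborSet u).ncard := hd c u huc.symm
    have := ncard_le2 hNcsub
    omega
  have hNc : G.neighborSet c = {u, a, b, x} :=
    eq_four hdegc hua.ne hub' (Ne.symm hxu) hab.ne hxa.symm hxb.symm
      (by simpa using huc.symm) (by simpa using hac.symm) (by simpa using hbc.symm)
      (by simpa using hxc'.symm)
  -- deg x ≤ 4
  have hNxsub : G.neighborSet x ∩ G.neighborSet a ⊆ {b, c} := by
    rintro w ⟨hwx, hwa⟩
    have hwnx : w ≠ x := fun h => G.irrefl (h ▸ hwx)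
    have hwnu : w ≠ u := by
      intro h; subst h; exact hnux (hwx : G.Adj x w).symm
    rw [hNa] at hwa
    rcases hwa with rfl | rfl | rfl | rfl <;> tauto
  have hdegx : (G.neighborSet x).ncard ≤ 4 := by
    have h : (G.neighborSet x).ncard ≤ 2 * (G.neighborSet x ∩ G.neighborSet a).ncard := hd x a hax.symm
    have := ncard_le2 hNxsub
    omega
  by_cases hdx : (G.neighborSet x).ncard = 4
  · obtain ⟨y, hyne, hNx⟩ := exists_fourth hdx (by simpa using hax.symm)
      (by simpa using hxb') (by simpa using hxc') hab.ne hac.ne hbc.ne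
    have hya : y ≠ a := by intro h; apply hyne; simp [h]
    have hyb : y ≠ b := by intro h; apply hyne; simp [h]
    have hyc : y ≠ c := by intro h; apply hyne; simp [h]
    have hxy : G.Adj x y := by rw [← SimpleGraph.mem_neighborSet, hNx]; simp
    have hyx : y ≠ x := hxy.ne'
    have hyu : y ≠ u := by
      intro h; subst h; exact hnux hxy.symm
    have key2 : (G.neighborSet x).ncard ≤ 2 * (G.neighborSet x ∩ G.neighborSet y).ncard :=
      hd x y hxy
    obtain ⟨w, hw⟩ := one_of_ncard (by omega : 1 ≤ (G.neighborSet x ∩ G.neighborSet y).ncard)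
    have hwx : w ∈ G.neighborSet x := hw.1
    have hwy : G.Adj y w := hw.2
    have hwny : w ≠ y := fun h => G.irrefl (h ▸ hwy)
    rw [hNx] at hwx
    rcases hwx with rfl | rfl | rfl | rfl
    · have : y ∈ G.neighborSet w := hwy.symm
      rw [hNa] at this
      rcases this with h' | h' | h' | h' <;> simp_all
    · have : y ∈ G.neighborSet w := hwy.symm
      rw [hNb] at this
      rcases this with h' | h' | h' | h' <;> simp_all
    · have : y ∈ G.neighborSet w := hwy.symm
      rw [hNc] at this
      rcases this with h' | h' | h' | h' <;> simp_all
    · exact hwny rfl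
  · -- deg x = 3, N x = {a,b,c}
    have hge : 3 ≤ (G.neighborSet x).ncard := by
      have hsub : ({a, b, c} : Set V) ⊆ G.neighborSet x := by
        rintro w (rfl | rfl | rfl)
        · exact hax.symm
        · exact hxb'
        · exact hxc'
      have := Set.ncard_le_ncard hsub (Set.toFinite _)
      rw [ncard3' hab.ne hac.ne hbc.ne] at this
      exact this
    have hNx : G.neighborSet x = {a, b, c} :=
      eq_three (by omega) hab.ne hac.ne hbc.ne (by simpa using hax.symm)
        (by simpa using hxb') (by simpa using hxc')
    -- closure
    have hcl : ∀ z ∈ ({u, a, b, c, x} : Set V), ∀ y, G.Adj z y → y ∈ ({u, a, b, c, x} : Set V) := by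
      rintro z (rfl | rfl | rfl | rfl | rfl) y hy
      · have : y ∈ G.neighborSet z := hy
        rw [hNu] at this; rcases this with rfl | rfl | rfl <;> simp
      · have : y ∈ G.neighborSet z := hy
        rw [hNa] at this; rcases this with rfl | rfl | rfl | rfl <;> simp
      · have : y ∈ G.neighborSet z := hy
        rw [hNb] at this; rcases this with rfl | rfl | rfl | rfl <;> simp
      · have : y ∈ G.neighborSet z := hy
        rw [hNc] at this; rcases this with rfl | rfl | rfl | rfl <;> simp
      · have : y ∈ G.neighborSet z := hy
        rw [hNx] at this; rcases this with rfl | rfl | rfl <;> simp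
    have hcard := card_V_le hc ⟨u, by simp⟩ hcl
    have := ncard_le5 u a b c x
    omega

lemma deg_not_three (hd : LocallyDirac G) (hc : G.Connected) (h8 : 8 ≤ Fintype.card V)
    (u : V) : degN G u ≠ 3 := by
  intro h3
  have h3' : (G.neighborSet u).ncard = 3 := h3
  obtain ⟨a, b, c, hab, hac, hbc, hNu⟩ := Set.ncard_eq_three.1 h3'
  have hua : G.Adj u a := by rw [← SimpleGraph.mem_neighborSet, hNu]; simp
  have hub : G.Adj u b := by rw [← SimpleGraph.mem_neighborSet, hNu]; simp
  have huc : G.Adj u c := by rw [← SimpleGraph.mem_neighborSet, hNu]; simp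
  have edge_a : b ∈ G.neighborSet a ∧ c ∈ G.neighborSet a := by
    have key : (G.neighborSet u).ncard ≤ 2 * (G.neighborSet u ∩ G.neighborSet a).ncard :=
      hd u a hua
    obtain ⟨w1, hw1, w2, hw2, hww⟩ := two_of_ncard
      (by omega : 2 ≤ (G.neighborSet u ∩ G.neighborSet a).ncard)
    have hcases : ∀ w ∈ G.neighborSet u ∩ G.neighborSet a, w = b ∨ w = c := by
      rintro w ⟨hwu, hwa⟩
      have : w ≠ a := fun h => G.irrefl (h ▸ hwa)
      rw [hNu] at hwu
      rcases hwu with rfl | rfl | rfl <;> tauto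
    have e1 := hcases w1 hw1; have e2 := hcases w2 hw2
    rcases e1 with rfl | rfl <;> rcases e2 with rfl | rfl
    · exact absurd rfl hww
    · exact ⟨hw1.2, hw2.2⟩
    · exact ⟨hw2.2, hw1.2⟩
    · exact absurd rfl hww
  have hab' : G.Adj a b := edge_a.1
  have hac' : G.Adj a c := edge_a.2
  have edge_b : a ∈ G.neighborSet b ∧ c ∈ G.neighborSet b := by
    have key : (G.neighborSet u).ncard ≤ 2 * (G.neighborSet u ∩ G.neighborSet b).ncard :=
      hd u b hub
    obtain ⟨w1, hw1, w2, hw2, hww⟩ := two_of_ncard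
      (by omega : 2 ≤ (G.neighborSet u ∩ G.neighborSet b).ncard)
    have hcases : ∀ w ∈ G.neighborSet u ∩ G.neighborSet b, w = a ∨ w = c := by
      rintro w ⟨hwu, hwb⟩
      have : w ≠ b := fun h => G.irrefl (h ▸ hwb)
      rw [hNu] at hwu
      rcases hwu with rfl | rfl | rfl <;> tauto
    have e1 := hcases w1 hw1; have e2 := hcases w2 hw2
    rcases e1 with rfl | rfl <;> rcases e2 with rfl | rfl
    · exact absurd rfl hww
    · exact ⟨hw1.2, hw2.2⟩
    · exact ⟨hw2.2, hw1.2⟩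
    · exact absurd rfl hww
  have hbc' : G.Adj b c := edge_b.2
  by_cases h4a : (G.neighborSet a).ncard = 4
  · exact aux3 hd hc h8 hNu hab' hac' hbc' h4a
  by_cases h4b : (G.neighborSet b).ncard = 4
  · have hNu2 : G.neighborSet u = {b, a, c} := by rw [hNu]; ext w; simp; tauto
    exact aux3 hd hc h8 hNu2 hab'.symm hbc' hac' h4b
  by_cases h4c : (G.neighborSet c).ncard = 4
  · have hNu3 : G.neighborSet u = {c, a, b} := by rw [hNu]; ext w; simp; tauto
    exact aux3 hd hc h8 hNu3 hac'.symm hbc'.symm hab' h4c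
  -- all degrees equal 3
  have hdega : (G.neighborSet a).ncard ≤ 4 := by
    have h : (G.neighborSet a).ncard ≤ 2 * (G.neighborSet a ∩ G.neighborSet u).ncard :=
      hd a u hua.symm
    have hsub : G.neighborSet a ∩ G.neighborSet u ⊆ {b, c} := by
      rintro w ⟨hwa, hwu⟩
      have : w ≠ a := fun h' => G.irrefl (h' ▸ hwa)
      rw [hNu] at hwu
      rcases hwu with rfl | rfl | rfl <;> tauto
    have := ncard_le2 hsub
    omega
  have hdegb : (G.neighborSet b).ncard ≤ 4 := by
    have h : (G.neighborSet b).ncard ≤ 2 * (G.neighborSet b ∩ G.neighborSet u).ncard :=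
      hd b u hub.symm
    have hsub : G.neighborSet b ∩ G.neighborSet u ⊆ {a, c} := by
      rintro w ⟨hwb, hwu⟩
      have : w ≠ b := fun h' => G.irrefl (h' ▸ hwb)
      rw [hNu] at hwu
      rcases hwu with rfl | rfl | rfl <;> tauto
    have := ncard_le2 hsub
    omega
  have hdegc : (G.neighborSet c).ncard ≤ 4 := by
    have h : (G.neighborSet c).ncard ≤ 2 * (G.neighborSet c ∩ G.neighborSet u).ncard :=
      hd c u huc.symm
    have hsub : G.neighborSet c ∩ G.neighborSet u ⊆ {a, b} := by
      rintro w ⟨hwc, hwu⟩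
      have : w ≠ c := fun h' => G.irrefl (h' ▸ hwc)
      rw [hNu] at hwu
      rcases hwu with rfl | rfl | rfl <;> tauto
    have := ncard_le2 hsub
    omega
  have hNa : G.neighborSet a = {u, b, c} :=
    eq_three (by omega) hub.ne huc.ne hbc (by simpa using hua.symm)
      (by simpa using hab') (by simpa using hac')
  have hNb : G.neighborSet b = {u, a, c} :=
    eq_three (by omega) hua.ne huc.ne hac (by simpa using hub.symm)
      (by simpa using hab'.symm) (by simpa using hbc')
  have hNc : G.neighborSet c = {u, a, b} :=
    eq_three (by omega) hua.ne hub.ne hab (by simpa using huc.symm)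
      (by simpa using hac'.symm) (by simpa using hbc'.symm)
  have hcl : ∀ z ∈ ({u, a, b, c} : Set V), ∀ y, G.Adj z y → y ∈ ({u, a, b, c} : Set V) := by
    rintro z (rfl | rfl | rfl | rfl) y hy
    · have : y ∈ G.neighborSet z := hy
      rw [hNu] at this; rcases this with rfl | rfl | rfl <;> simp
    · have : y ∈ G.neighborSet z := hy
      rw [hNa] at this; rcases this with rfl | rfl | rfl <;> simp
    · have : y ∈ G.neighborSet z := hy
      rw [hNb] at this; rcases this with rfl | rfl | rfl <;> simp
    · have : y ∈ G.neighborSet z := hy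
      rw [hNc] at this; rcases this with rfl | rfl | rfl <;> simp
  have hcard := card_V_le hc ⟨u, by simp⟩ hcl
  have := ncard_le4 u a b c
  omega

lemma deg_ge_four (hd : LocallyDirac G) (hc : G.Connected) (h8 : 8 ≤ Fintype.card V)
    (u : V) : 4 ≤ (G.neighborSet u).ncard := by
  have h0 : (G.neighborSet u).ncard ≠ 0 := by
    obtain ⟨w, hw⟩ := exists_adj hc h8 u
    intro h
    have : G.neighborSet u = ∅ := by
      rwa [Set.ncard_eq_zero (Set.toFinite _)] at h
    have hw' : w ∈ G.neighborSet u := hw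
    rw [this] at hw'
    exact hw'
  have h1 := deg_not_one hd u
  have h2 := deg_not_two hd hc h8 u
  have h3 := deg_not_three hd hc h8 u
  have h1' : (G.neighborSet u).ncard ≠ 1 := h1
  have h2' : (G.neighborSet u).ncard ≠ 2 := h2
  have h3' : (G.neighborSet u).ncard ≠ 3 := h3
  omega

private lemma eswap {s t : Set V} (h : ∃ a ∈ s, ∃ b ∈ t, G.Adj a b) :
    ∃ a ∈ t, ∃ b ∈ s, G.Adj a b := by
  obtain ⟨a, ha, b, hb, hab⟩ := h
  exact ⟨b, hb, a, ha, hab.symm⟩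

lemma K5build {A0 A1 A2 A3 A4 : Set V}
    (n0 : A0.Nonempty) (n1 : A1.Nonempty) (n2 : A2.Nonempty) (n3 : A3.Nonempty)
    (n4 : A4.Nonempty)
    (c0 : (G.induce A0).Connected) (c1 : (G.induce A1).Connected)
    (c2 : (G.induce A2).Connected) (c3 : (G.induce A3).Connected)
    (c4 : (G.induce A4).Connected)
    (d01 : Disjoint A0 A1) (d02 : Disjoint A0 A2) (d03 : Disjoint A0 A3)
    (d04 : Disjoint A0 A4) (d12 : Disjoint A1 A2) (d13 : Disjoint A1 A3)
    (d14 : Disjoint A1 A4) (d23 : Disjoint A2 A3) (d24 : Disjoint A2 A4)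
    (d34 : Disjoint A3 A4)
    (e01 : ∃ a ∈ A0, ∃ b ∈ A1, G.Adj a b) (e02 : ∃ a ∈ A0, ∃ b ∈ A2, G.Adj a b)
    (e03 : ∃ a ∈ A0, ∃ b ∈ A3, G.Adj a b) (e04 : ∃ a ∈ A0, ∃ b ∈ A4, G.Adj a b)
    (e12 : ∃ a ∈ A1, ∃ b ∈ A2, G.Adj a b) (e13 : ∃ a ∈ A1, ∃ b ∈ A3, G.Adj a b)
    (e14 : ∃ a ∈ A1, ∃ b ∈ A4, G.Adj a b) (e23 : ∃ a ∈ A2, ∃ b ∈ A3, G.Adj a b)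
    (e24 : ∃ a ∈ A2, ∃ b ∈ A4, G.Adj a b) (e34 : ∃ a ∈ A3, ∃ b ∈ A4, G.Adj a b) :
    HasMinor G (completeGraph (Fin 5)) := by
  refine ⟨fun i => match i with
    | 0 => A0 | 1 => A1 | 2 => A2 | 3 => A3 | 4 => A4, ?_, ?_, ?_, ?_⟩
  · intro w; fin_cases w <;> assumption
  · intro w; fin_cases w <;> assumption
  · intro w1 w2 hne
    fin_cases w1 <;> fin_cases w2 <;>
      first
        | exact absurd rfl hne
        | assumption
        | exact d01.symm | exact d02.symm | exact d03.symm | exact d04.symm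
        | exact d12.symm | exact d13.symm | exact d14.symm | exact d23.symm
        | exact d24.symm | exact d34.symm
  · intro w1 w2 hne
    fin_cases w1 <;> fin_cases w2 <;>
      first
        | exact absurd rfl hne
        | assumption
        | exact eswap e01 | exact eswap e02 | exact eswap e03 | exact eswap e04
        | exact eswap e12 | exact eswap e13 | exact eswap e14 | exact eswap e23
        | exact eswap e24 | exact eswap e34

lemma disj_pair {a b c d : V} (h1 : a ≠ c) (h2 : a ≠ d) (h3 : b ≠ c) (h4 : b ≠ d) :
    Disjoint ({a, b} : Set V) {c, d} := by
  rw [Set.disjoint_left]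
  intro w hw hw'
  simp only [Set.mem_insert_iff, Set.mem_singleton_iff] at hw hw'
  rcases hw with rfl | rfl <;> rcases hw' with rfl | rfl <;> tauto

lemma disj_single_pair {a b c : V} (h1 : a ≠ b) (h2 : a ≠ c) :
    Disjoint ({a} : Set V) {b, c} := by
  rw [Set.disjoint_left]
  intro w hw hw'
  simp only [Set.mem_singleton_iff, Set.mem_insert_iff] at hw hw'
  rcases hw' with rfl | rfl <;> simp_all

lemma connected_induce_of_hub {B : Set V} (hne : B.Nonempty)
    (h : ∀ p ∈ B, ∀ q ∈ B, p ≠ q → ∃ r ∈ B, (r = p ∨ G.Adj p r) ∧ (r = q ∨ G.Adj q r)) :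
    (G.induce B).Connected := by
  haveI : Nonempty B := ⟨⟨hne.choose, hne.choose_spec⟩⟩
  constructor
  rintro ⟨p, hp⟩ ⟨q, hq⟩
  have step : ∀ (s : V) (hs : s ∈ B) (t : V) (ht : t ∈ B), (t = s ∨ G.Adj s t) →
      (G.induce B).Reachable ⟨s, hs⟩ ⟨t, ht⟩ := by
    rintro s hs t ht (rfl | hadj)
    · rfl
    · exact SimpleGraph.Adj.reachable hadj
  by_cases hpq : p = q
  · subst hpq; rfl
  · obtain ⟨r, hr, h1, h2⟩ := h p hp q hq hpq
    exact (step p hp r hr h1).trans (step q hq r hr h2).symm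

lemma k5_of_deg5 (hd : LocallyDirac G) {v : V} (h5 : 5 ≤ (G.neighborSet v).ncard) :
    HasMinor G (completeGraph (Fin 5)) := by
  set S := G.neighborSet v with hS
  have hvS : v ∉ S := by simp [hS]
  have hSadj : ∀ u ∈ S, G.Adj v u := fun u hu => hu
  have hdeg : ∀ u ∈ S, S.ncard ≤ 2 * (S ∩ G.neighborSet u).ncard := by
    intro u hu
    exact hd v u (hSadj u hu)
  have hd3 : ∀ u ∈ S, 3 ≤ (S ∩ G.neighborSet u).ncard := by
    intro u hu; have := hdeg u hu; omega
  by_cases htri : ∃ x ∈ S, ∃ y ∈ S, ∃ z ∈ S, G.Adj x y ∧ G.Adj x z ∧ G.Adj y z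
  · obtain ⟨x, hx, y, hy, z, hz, hxy, hxz, hyz⟩ := htri
    by_cases hall : ∃ u ∈ S, G.Adj u x ∧ G.Adj u y ∧ G.Adj u z
    · obtain ⟨u, hu, hux, huy, huz⟩ := hall
      have hvx : v ≠ x := fun h => hvS (h ▸ hx)
      have hvy : v ≠ y := fun h => hvS (h ▸ hy)
      have hvz : v ≠ z := fun h => hvS (h ▸ hz)
      have hvu : v ≠ u := fun h => hvS (h ▸ hu)
      exact K5build (Set.singleton_nonempty v) (Set.singleton_nonempty x)
        (Set.singleton_nonempty y) (Set.singleton_nonempty z) (Set.singleton_nonempty u)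
        (connected_induce_singleton v) (connected_induce_singleton x)
        (connected_induce_singleton y) (connected_induce_singleton z)
        (connected_induce_singleton u)
        (by simpa using hvx) (by simpa using hvy) (by simpa using hvz)
        (by simpa using hvu) (by simpa using hxy.ne) (by simpa using hxz.ne)
        (by simpa using hux.ne') (by simpa using hyz.ne) (by simpa using huy.ne')
        (by simpa using huz.ne')
        ⟨v, rfl, x, rfl, hSadj x hx⟩ ⟨v, rfl, y, rfl, hSadj y hy⟩
        ⟨v, rfl, z, rfl, hSadj z hz⟩ ⟨v, rfl, u, rfl, hSadj u hu⟩
        ⟨x, rfl, y, rfl, hxy⟩ ⟨x, rfl, z, rfl, hxz⟩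
        ⟨x, rfl, u, rfl, hux.symm⟩ ⟨y, rfl, z, rfl, hyz⟩
        ⟨y, rfl, u, rfl, huy.symm⟩ ⟨z, rfl, u, rfl, huz.symm⟩
    · -- no common apex: use B = S \ {x,y,z} as the fifth branch set
      push_neg at hall
      set T : Set V := {x, y, z} with hT
      set B : Set V := S \ T with hB
      have hTS : T ⊆ S := by
        rw [hT]; rintro w (rfl | rfl | rfl) <;> assumption
      have hTcard : T.ncard = 3 := ncard3' hxy.ne hxz.ne hyz.ne
      have hBcard : B.ncard = S.ncard - 3 := by
        rw [hB, Set.ncard_diff hTS, hTcard]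
      have hsplit : ∀ u : V, (S ∩ G.neighborSet u).ncard =
          (S ∩ G.neighborSet u ∩ T).ncard + (B ∩ G.neighborSet u).ncard := by
        intro u
        have hsub : S ∩ G.neighborSet u ∩ T ⊆ S ∩ G.neighborSet u := Set.inter_subset_left
        have h2 := Set.ncard_diff hsub
        have h1 : (S ∩ G.neighborSet u) \ (S ∩ G.neighborSet u ∩ T) = B ∩ G.neighborSet u := by
          rw [hB]; ext w; simp; tauto
        rw [h1] at h2
        have h3 := Set.ncard_le_ncard hsub (Set.toFinite _)
        omega
      have hT2 : ∀ u ∈ S, (G.Adj u x → G.Adj u y → ¬G.Adj u z) →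
          (S ∩ G.neighborSet u ∩ T).ncard ≤ 2 := by
        intro u hu hnadj
        by_contra hgt
        have h3 : T.ncard ≤ (S ∩ G.neighborSet u ∩ T).ncard := by omega
        have heq : S ∩ G.neighborSet u ∩ T = T :=
          Set.eq_of_subset_of_ncard_le Set.inter_subset_right (by omega) (Set.toFinite _)
        have hmx : x ∈ S ∩ G.neighborSet u ∩ T := by
          rw [heq, hT]; simp
        have hmy : y ∈ S ∩ G.neighborSet u ∩ T := by
          rw [heq, hT]; simp
        have hmz : z ∈ S ∩ G.neighborSet u ∩ T := by
          rw [heq, hT]; simp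
        exact hnadj hmx.1.2 hmy.1.2 hmz.1.2
      have hBu : ∀ u, u ∈ S → (S ∩ G.neighborSet u ∩ T).ncard ≤ 2 →
          ∃ w ∈ B, G.Adj u w := by
        intro u hu h2
        have h3 := hd3 u hu
        have h4 := hsplit u
        obtain ⟨w, hw⟩ := one_of_ncard (by omega : 1 ≤ (B ∩ G.neighborSet u).ncard)
        exact ⟨w, hw.1, hw.2⟩
      have hT2x : (S ∩ G.neighborSet x ∩ T).ncard ≤ 2 := by
        apply ncard_le2 (a := y) (b := z)
        rintro w ⟨⟨hwS, hwN⟩, hwT⟩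
        have : w ≠ x := fun h => G.irrefl (h ▸ (hwN : G.Adj x w))
        rw [hT] at hwT
        rcases hwT with rfl | rfl | rfl <;> simp_all
      have hT2y : (S ∩ G.neighborSet y ∩ T).ncard ≤ 2 := by
        apply ncard_le2 (a := x) (b := z)
        rintro w ⟨⟨hwS, hwN⟩, hwT⟩
        have : w ≠ y := fun h => G.irrefl (h ▸ (hwN : G.Adj y w))
        rw [hT] at hwT
        rcases hwT with rfl | rfl | rfl <;> simp_all
      have hT2z : (S ∩ G.neighborSet z ∩ T).ncard ≤ 2 := by
        apply ncard_le2 (a := x) (b := y)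
        rintro w ⟨⟨hwS, hwN⟩, hwT⟩
        have : w ≠ z := fun h => G.irrefl (h ▸ (hwN : G.Adj z w))
        rw [hT] at hwT
        rcases hwT with rfl | rfl | rfl <;> simp_all
      have hm : 5 ≤ S.ncard := h5
      have hBne : B.Nonempty := by
        apply Set.nonempty_of_ncard_ne_zero
        omega
      have hBS : B ⊆ S := by rw [hB]; exact Set.diff_subset
      have hconnB : (G.induce B).Connected := by
        apply connected_induce_of_hub hBne
        intro p hp q hq hpq
        have hpS : p ∈ S := hBS hp
        have hqS : q ∈ S := hBS hq
        have hpT2 : (S ∩ G.neighborSet p ∩ T).ncard ≤ 2 := hT2 p hpS (hall p hpS)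
        have hqT2 : (S ∩ G.neighborSet q ∩ T).ncard ≤ 2 := hT2 q hqS (hall q hqS)
        have hdp := hdeg p hpS
        have hdq := hdeg q hqS
        have hsp := hsplit p
        have hsq := hsplit q
        set Ap : Set V := insert p (B ∩ G.neighborSet p) with hAp
        set Aq : Set V := insert q (B ∩ G.neighborSet q) with hAq
        have hApB : Ap ⊆ B := by
          rw [hAp]; exact Set.insert_subset hp Set.inter_subset_left
        have hAqB : Aq ⊆ B := by
          rw [hAq]; exact Set.insert_subset hq Set.inter_subset_left
        have hApc : Ap.ncard = (B ∩ G.neighborSet p).ncard + 1 := by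
          rw [hAp, Set.ncard_insert_of_notMem (fun h => G.irrefl (h.2 : G.Adj p p))]
        have hAqc : Aq.ncard = (B ∩ G.neighborSet q).ncard + 1 := by
          rw [hAq, Set.ncard_insert_of_notMem (fun h => G.irrefl (h.2 : G.Adj q q))]
        have hnd : ¬ Disjoint Ap Aq := by
          intro hdis
          have hu1 := Set.ncard_union_eq hdis (Set.toFinite _) (Set.toFinite _)
          have hu2 : Ap ∪ Aq ⊆ B := Set.union_subset hApB hAqB
          have hu3 := Set.ncard_le_ncard hu2 (Set.toFinite _)
          omega
        obtain ⟨r, hrp, hrq⟩ := Set.not_disjoint_iff.1 hnd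
        refine ⟨r, hApB hrp, ?_, ?_⟩
        · rw [hAp] at hrp
          rcases hrp with rfl | ⟨_, hN⟩
          · exact Or.inl rfl
          · exact Or.inr hN
        · rw [hAq] at hrq
          rcases hrq with rfl | ⟨_, hN⟩
          · exact Or.inl rfl
          · exact Or.inr hN
      have hvx : v ≠ x := fun h => hvS (h ▸ hx)
      have hvy : v ≠ y := fun h => hvS (h ▸ hy)
      have hvz : v ≠ z := fun h => hvS (h ▸ hz)
      have hxB : x ∉ B := by rw [hB]; intro h; exact h.2 (by rw [hT]; simp)
      have hyB : y ∉ B := by rw [hB]; intro h; exact h.2 (by rw [hT]; simp)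
      have hzB : z ∉ B := by rw [hB]; intro h; exact h.2 (by rw [hT]; simp)
      have hvB : v ∉ B := fun h => hvS (hBS h)
      obtain ⟨bx, hbxB, hbxadj⟩ := hBu x hx hT2x
      obtain ⟨by', hbyB, hbyadj⟩ := hBu y hy hT2y
      obtain ⟨bz, hbzB, hbzadj⟩ := hBu z hz hT2z
      have hBne2 := hBne
      obtain ⟨b0, hb0⟩ := hBne2
      exact K5build (Set.singleton_nonempty v) (Set.singleton_nonempty x)
        (Set.singleton_nonempty y) (Set.singleton_nonempty z) hBne
        (connected_induce_singleton v) (connected_induce_singleton x)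
        (connected_induce_singleton y) (connected_induce_singleton z) hconnB
        (by simpa using hvx) (by simpa using hvy) (by simpa using hvz)
        (Set.disjoint_singleton_left.2 hvB)
        (by simpa using hxy.ne) (by simpa using hxz.ne)
        (Set.disjoint_singleton_left.2 hxB)
        (by simpa using hyz.ne)
        (Set.disjoint_singleton_left.2 hyB)
        (Set.disjoint_singleton_left.2 hzB)
        ⟨v, rfl, x, rfl, hSadj x hx⟩ ⟨v, rfl, y, rfl, hSadj y hy⟩
        ⟨v, rfl, z, rfl, hSadj z hz⟩ ⟨v, rfl, b0, hb0, hSadj b0 (hBS hb0)⟩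
        ⟨x, rfl, y, rfl, hxy⟩ ⟨x, rfl, z, rfl, hxz⟩
        ⟨x, rfl, bx, hbxB, hbxadj⟩ ⟨y, rfl, z, rfl, hyz⟩
        ⟨y, rfl, by', hbyB, hbyadj⟩ ⟨z, rfl, bz, hbzB, hbzadj⟩
  · -- neighborhood triangle-free: S splits as NX ⊔ NY, complete bipartite structure
    push_neg at htri
    have hm : 5 ≤ S.ncard := h5
    obtain ⟨x, hx⟩ := one_of_ncard (by omega : 1 ≤ S.ncard)
    obtain ⟨y, hy⟩ := one_of_ncard (by have := hd3 x hx; omega :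
      1 ≤ (S ∩ G.neighborSet x).ncard)
    have hyS : y ∈ S := hy.1
    have hxy : G.Adj x y := hy.2
    set NX : Set V := S ∩ G.neighborSet x with hNXdef
    set NY : Set V := S ∩ G.neighborSet y with hNYdef
    have hdisj : Disjoint NX NY := by
      rw [Set.disjoint_left]
      rintro w ⟨hwS, hwNx⟩ ⟨_, hwNy⟩
      exact htri x hx y hyS w hwS hxy hwNx hwNy
    have hXcard : S.ncard ≤ 2 * NX.ncard := hdeg x hx
    have hYcard : S.ncard ≤ 2 * NY.ncard := hdeg y hyS
    have huni : NX ∪ NY ⊆ S := Set.union_subset Set.inter_subset_left Set.inter_subset_left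
    have hucard := Set.ncard_union_eq hdisj (Set.toFinite _) (Set.toFinite _)
    have hcover : NX ∪ NY = S :=
      Set.eq_of_subset_of_ncard_le huni (by rw [hucard]; omega) (Set.toFinite _)
    have hsum_eq : NX.ncard + NY.ncard = S.ncard := by rw [← hucard, hcover]
    have key1 : ∀ u ∈ NX, S ∩ G.neighborSet u = NY := by
      intro u hu
      have huS : u ∈ S := hu.1
      have hxu : G.Adj x u := hu.2
      have hsub : S ∩ G.neighborSet u ⊆ NY := by
        rintro w ⟨hwS, hwN⟩
        have hwnX : w ∉ NX := by
          rintro ⟨_, hwNx⟩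
          exact htri x hx u huS w hwS hxu hwNx hwN
        have hmem : w ∈ NX ∪ NY := by rw [hcover]; exact hwS
        rcases hmem with h | h
        · exact absurd h hwnX
        · exact h
      have hucard2 : S.ncard ≤ 2 * (S ∩ G.neighborSet u).ncard := hdeg u huS
      exact Set.eq_of_subset_of_ncard_le hsub (by omega) (Set.toFinite _)
    have hyNX : y ∈ NX := ⟨hyS, hxy⟩
    have hxNY : x ∈ NY := ⟨hx, hxy.symm⟩
    have hNX3 : 3 ≤ NX.ncard := hd3 x hx
    have hNY3 : 3 ≤ NY.ncard := hd3 y hyS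
    have hby : ({y} : Set V) ⊆ NX := Set.singleton_subset_iff.2 hyNX
    have hbx : ({x} : Set V) ⊆ NY := Set.singleton_subset_iff.2 hxNY
    have hc1 : (NX \ {y}).ncard = NX.ncard - 1 := by
      rw [Set.ncard_diff hby, Set.ncard_singleton]
    obtain ⟨b2, hb2, b3, hb3, hb23⟩ := two_of_ncard (by omega : 2 ≤ (NX \ {y}).ncard)
    have hc2 : (NY \ {x}).ncard = NY.ncard - 1 := by
      rw [Set.ncard_diff hbx, Set.ncard_singleton]
    obtain ⟨a2, ha2, a3, ha3, ha23⟩ := two_of_ncard (by omega : 2 ≤ (NY \ {x}).ncard)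
    have hb2X : b2 ∈ NX := hb2.1
    have hb3X : b3 ∈ NX := hb3.1
    have ha2Y : a2 ∈ NY := ha2.1
    have ha3Y : a3 ∈ NY := ha3.1
    have hNb2 := key1 b2 hb2X
    have hNb3 := key1 b3 hb3X
    have adj_b2a2 : G.Adj b2 a2 := by
      have hmem : a2 ∈ S ∩ G.neighborSet b2 := by rw [hNb2]; exact ha2Y
      exact hmem.2
    have adj_b2a3 : G.Adj b2 a3 := by
      have hmem : a3 ∈ S ∩ G.neighborSet b2 := by rw [hNb2]; exact ha3Y
      exact hmem.2
    have hXYne : ∀ p ∈ NX, ∀ q ∈ NY, p ≠ q := by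
      intro p hp q hq h
      exact Set.disjoint_left.1 hdisj hp (h ▸ hq)
    have hvx : v ≠ x := fun h => hvS (h ▸ hx)
    have hvy : v ≠ y := fun h => hvS (h ▸ hyS)
    have hva2 : v ≠ a2 := fun h => hvS (h ▸ ha2Y.1)
    have hva3 : v ≠ a3 := fun h => hvS (h ▸ ha3Y.1)
    have hvb2 : v ≠ b2 := fun h => hvS (h ▸ hb2X.1)
    have hvb3 : v ≠ b3 := fun h => hvS (h ▸ hb3X.1)
    have hxa2 : x ≠ a2 := fun h => ha2.2 (by simp [← h])
    have hxa3 : x ≠ a3 := fun h => ha3.2 (by simp [← h])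
    have hxb2 : x ≠ b2 := (hb2X.2 : G.Adj x b2).ne
    have hxb3 : x ≠ b3 := (hb3X.2 : G.Adj x b3).ne
    have hya2 : y ≠ a2 := (ha2Y.2 : G.Adj y a2).ne
    have hya3 : y ≠ a3 := (ha3Y.2 : G.Adj y a3).ne
    have hyb2 : y ≠ b2 := fun h => hb2.2 (by simp [← h])
    have hyb3 : y ≠ b3 := fun h => hb3.2 (by simp [← h])
    have ha2b2 : a2 ≠ b2 := (hXYne b2 hb2X a2 ha2Y).symm
    have ha2b3 : a2 ≠ b3 := (hXYne b3 hb3X a2 ha2Y).symm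
    have ha3b2 : a3 ≠ b2 := (hXYne b2 hb2X a3 ha3Y).symm
    have ha3b3 : a3 ≠ b3 := (hXYne b3 hb3X a3 ha3Y).symm
    exact K5build (Set.singleton_nonempty v) (Set.singleton_nonempty x)
      (Set.singleton_nonempty y) ⟨a2, by simp⟩ ⟨a3, by simp⟩
      (connected_induce_singleton v) (connected_induce_singleton x)
      (connected_induce_singleton y)
      (connected_induce_pair adj_b2a2.symm) (connected_induce_pair (by
        have hmem : a3 ∈ S ∩ G.neighborSet b3 := by rw [hNb3]; exact ha3Y
        exact (hmem.2 : G.Adj b3 a3).symm))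
      (by simpa using hvx) (by simpa using hvy)
      (disj_single_pair hva2 hvb2) (disj_single_pair hva3 hvb3)
      (by simpa using hxy.ne)
      (disj_single_pair hxa2 hxb2) (disj_single_pair hxa3 hxb3)
      (disj_single_pair hya2 hyb2) (disj_single_pair hya3 hyb3)
      (disj_pair ha23 ha2b3 ha3b2.symm hb23)
      ⟨v, rfl, x, rfl, hSadj x hx⟩ ⟨v, rfl, y, rfl, hSadj y hyS⟩
      ⟨v, rfl, a2, by simp, hSadj a2 ha2Y.1⟩ ⟨v, rfl, a3, by simp, hSadj a3 ha3Y.1⟩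
      ⟨x, rfl, y, rfl, hxy⟩
      ⟨x, rfl, b2, by simp, hb2X.2⟩ ⟨x, rfl, b3, by simp, hb3X.2⟩
      ⟨y, rfl, a2, by simp, ha2Y.2⟩ ⟨y, rfl, a3, by simp, ha3Y.2⟩
      ⟨b2, by simp, a3, by simp, adj_b2a3⟩

lemma subaux (hd : LocallyDirac G) (hc : G.Connected) (h8 : 8 ≤ Fintype.card V)
    (hreg : ∀ w : V, (G.neighborSet w).ncard = 4) {v u p q r : V}
    (hNv : G.neighborSet v = {u, p, q, r}) (hNu : G.neighborSet u = {v, p, q, r})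
    (hqr : q ≠ r) (hpr : p ≠ r) (hpq : G.Adj p q) : False := by
  have hvu : G.Adj v u := by rw [← SimpleGraph.mem_neighborSet, hNv]; simp
  have hvp : G.Adj v p := by rw [← SimpleGraph.mem_neighborSet, hNv]; simp
  have hvq : G.Adj v q := by rw [← SimpleGraph.mem_neighborSet, hNv]; simp
  have hvr : G.Adj v r := by rw [← SimpleGraph.mem_neighborSet, hNv]; simp
  have hup : G.Adj u p := by rw [← SimpleGraph.mem_neighborSet, hNu]; simp
  have huq : G.Adj u q := by rw [← SimpleGraph.mem_neighborSet, hNu]; simp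
  have hur : G.Adj u r := by rw [← SimpleGraph.mem_neighborSet, hNu]; simp
  obtain ⟨t, htne, hNp⟩ := exists_fourth (hreg p) (by simpa using hvp.symm)
    (by simpa using hup.symm) (by simpa using hpq) hvu.ne hvq.ne huq.ne
  have htv : t ≠ v := by intro h; apply htne; simp [h]
  have htu : t ≠ u := by intro h; apply htne; simp [h]
  have htq : t ≠ q := by intro h; apply htne; simp [h]
  have hpt : G.Adj p t := by rw [← SimpleGraph.mem_neighborSet, hNp]; simp
  have htp : t ≠ p := hpt.ne'
  by_cases htr : t = r
  · rw [htr] at hNp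
    -- N p = {v, u, q, r}
    obtain ⟨t', ht'ne, hNq⟩ := exists_fourth (hreg q) (by simpa using hvq.symm)
      (by simpa using huq.symm) (by simpa using hpq.symm) hvu.ne hvp.ne hup.ne
    have ht'v : t' ≠ v := by intro h; apply ht'ne; simp [h]
    have ht'u : t' ≠ u := by intro h; apply ht'ne; simp [h]
    have ht'p : t' ≠ p := by intro h; apply ht'ne; simp [h]
    have hqt' : G.Adj q t' := by rw [← SimpleGraph.mem_neighborSet, hNq]; simp
    have ht'q : t' ≠ q := hqt'.ne'
    by_cases ht'r : t' = r
    · rw [ht'r] at hNq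
      -- K5 on {v,u,p,q,r}; closure
      have hrp : G.Adj r p := by
        have hm : r ∈ G.neighborSet p := by rw [hNp]; simp
        exact (hm : G.Adj p r).symm
      have hrq : G.Adj r q := by
        have hm : r ∈ G.neighborSet q := by rw [hNq]; simp
        exact (hm : G.Adj q r).symm
      have hNr : G.neighborSet r = {v, u, p, q} :=
        eq_four (le_of_eq (hreg r)) hvu.ne hvp.ne hvq.ne hup.ne huq.ne hpq.ne
          (by simpa using hvr.symm) (by simpa using hur.symm)
          (by simpa using hrp) (by simpa using hrq)
      have hcl : ∀ z ∈ ({v, u, p, q, r} : Set V), ∀ w, G.Adj z w →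
          w ∈ ({v, u, p, q, r} : Set V) := by
        rintro z (rfl | rfl | rfl | rfl | rfl) w hw
        · have : w ∈ G.neighborSet z := hw
          rw [hNv] at this; rcases this with rfl | rfl | rfl | rfl <;> simp
        · have : w ∈ G.neighborSet z := hw
          rw [hNu] at this; rcases this with rfl | rfl | rfl | rfl <;> simp
        · have : w ∈ G.neighborSet z := hw
          rw [hNp] at this; rcases this with rfl | rfl | rfl | rfl <;> simp
        · have : w ∈ G.neighborSet z := hw
          rw [hNq] at this; rcases this with rfl | rfl | rfl | rfl <;> simp
        · have : w ∈ G.neighborSet z := hw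
          rw [hNr] at this; rcases this with rfl | rfl | rfl | rfl <;> simp
      have hcard := card_V_le hc ⟨v, by simp⟩ hcl
      have := ncard_le5 v u p q r
      omega
    · -- t' is a new vertex
      have key : (G.neighborSet q).ncard ≤ 2 * (G.neighborSet q ∩ G.neighborSet t').ncard :=
        hd q t' hqt'
      have h4 := hreg q
      obtain ⟨w, hw⟩ := one_of_ncard
        (by omega : 1 ≤ (G.neighborSet q ∩ G.neighborSet t').ncard)
      have hwq : w ∈ G.neighborSet q := hw.1
      have hwt' : G.Adj t' w := hw.2
      have hwnt' : w ≠ t' := fun h => G.irrefl (h ▸ hwt')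
      rw [hNq] at hwq
      rcases hwq with rfl | rfl | rfl | rfl
      · have : t' ∈ G.neighborSet w := hwt'.symm
        rw [hNv] at this; rcases this with h' | h' | h' | h' <;> simp_all
      · have : t' ∈ G.neighborSet w := hwt'.symm
        rw [hNu] at this; rcases this with h' | h' | h' | h' <;> simp_all
      · have : t' ∈ G.neighborSet w := hwt'.symm
        rw [hNp] at this; rcases this with h' | h' | h' | h' <;> simp_all
      · exact hwnt' rfl
  · -- t is a new vertex (t ∉ {v,u,q,r})
    have key : (G.neighborSet p).ncard ≤ 2 * (G.neighborSet p ∩ G.neighborSet t).ncard :=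
      hd p t hpt
    have h4 := hreg p
    obtain ⟨w1, hw1, w2, hw2, hww⟩ := two_of_ncard
      (by omega : 2 ≤ (G.neighborSet p ∩ G.neighborSet t).ncard)
    have hcases : ∀ w ∈ G.neighborSet p ∩ G.neighborSet t, w = q := by
      rintro w ⟨hwp, hwt⟩
      have hwnt : w ≠ t := fun h => G.irrefl (h ▸ (hwt : G.Adj t w))
      rw [hNp] at hwp
      rcases hwp with rfl | rfl | rfl | rfl
      · exfalso
        have : t ∈ G.neighborSet w := (hwt : G.Adj t w).symm
        rw [hNv] at this; rcases this with h' | h' | h' | h' <;> simp_all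
      · exfalso
        have : t ∈ G.neighborSet w := (hwt : G.Adj t w).symm
        rw [hNu] at this; rcases this with h' | h' | h' | h' <;> simp_all
      · rfl
      · exact absurd rfl hwnt
    have e1 := hcases w1 hw1
    have e2 := hcases w2 hw2
    subst e1; subst e2
    exact hww rfl

lemma codeg_le_two (hd : LocallyDirac G) (hc : G.Connected) (h8 : 8 ≤ Fintype.card V)
    (hreg : ∀ w : V, (G.neighborSet w).ncard = 4) {v u : V} (hadj : G.Adj v u) :
    (G.neighborSet v ∩ G.neighborSet u).ncard ≤ 2 := by
  by_contra hgt
  have h3 : 3 ≤ (G.neighborSet v ∩ G.neighborSet u).ncard := by omega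
  have huv : u ∈ G.neighborSet v := hadj
  have hvu : v ∈ G.neighborSet u := hadj.symm
  have hsub1 : G.neighborSet v ∩ G.neighborSet u ⊆ G.neighborSet v \ {u} := by
    rintro w ⟨hw1, hw2⟩
    exact ⟨hw1, by simp; exact fun h => G.irrefl (h ▸ (hw2 : G.Adj u w))⟩
  have hd1 : (G.neighborSet v \ {u}).ncard = 3 := by
    rw [Set.ncard_diff (by simpa using huv), hreg v, Set.ncard_singleton]
  have heq1 : G.neighborSet v ∩ G.neighborSet u = G.neighborSet v \ {u} :=
    Set.eq_of_subset_of_ncard_le hsub1 (by omega) (Set.toFinite _)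
  have hsub2 : G.neighborSet v ∩ G.neighborSet u ⊆ G.neighborSet u \ {v} := by
    rintro w ⟨hw1, hw2⟩
    exact ⟨hw2, by simp; exact fun h => G.irrefl (h ▸ (hw1 : G.Adj v w))⟩
  have hd2 : (G.neighborSet u \ {v}).ncard = 3 := by
    rw [Set.ncard_diff (by simpa using hvu), hreg u, Set.ncard_singleton]
  have heq2 : G.neighborSet v ∩ G.neighborSet u = G.neighborSet u \ {v} :=
    Set.eq_of_subset_of_ncard_le hsub2 (by omega) (Set.toFinite _)
  have hc3 : (G.neighborSet v ∩ G.neighborSet u).ncard = 3 := by rw [heq1]; exact hd1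
  obtain ⟨p, q, r, hpq', hpr', hqr', hC⟩ := Set.ncard_eq_three.1 hc3
  have hNv : G.neighborSet v = {u, p, q, r} := by
    have h1 : insert u (G.neighborSet v \ {u}) = G.neighborSet v := by
      rw [Set.insert_diff_singleton, Set.insert_eq_self.2 huv]
    rw [← h1, ← heq1, hC]
  have hNu : G.neighborSet u = {v, p, q, r} := by
    have h1 : insert v (G.neighborSet u \ {v}) = G.neighborSet u := by
      rw [Set.insert_diff_singleton, Set.insert_eq_self.2 hvu]
    rw [← h1, ← heq2, hC]
  -- p is adjacent to q or r
  have hpC : p ∈ G.neighborSet v ∩ G.neighborSet u := by rw [hC]; simp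
  have hvp : G.Adj v p := hpC.1
  have hup : G.Adj u p := hpC.2
  have key : (G.neighborSet p).ncard ≤ 2 * (G.neighborSet p ∩ G.neighborSet v).ncard :=
    hd p v hvp.symm
  have h4 := hreg p
  obtain ⟨w1, hw1, w2, hw2, hww⟩ := two_of_ncard
    (by omega : 2 ≤ (G.neighborSet p ∩ G.neighborSet v).ncard)
  have hcases : ∀ w ∈ G.neighborSet p ∩ G.neighborSet v, w = u ∨ w = q ∨ w = r := by
    rintro w ⟨hwp, hwv⟩
    have : w ≠ p := fun h => G.irrefl (h ▸ (hwp : G.Adj p w))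
    rw [hNv] at hwv
    rcases hwv with rfl | rfl | rfl | rfl <;> tauto
  have hadjqr : G.Adj p q ∨ G.Adj p r := by
    have e1 := hcases w1 hw1
    have e2 := hcases w2 hw2
    rcases e1 with rfl | rfl | rfl
    · rcases e2 with rfl | rfl | rfl
      · exact absurd rfl hww
      · exact Or.inl hw2.1
      · exact Or.inr hw2.1
    · exact Or.inl hw1.1
    · exact Or.inr hw1.1
  rcases hadjqr with hpq | hpr
  · exact subaux hd hc h8 hreg hNv hNu hqr' hpr' hpq
  · have hNv' : G.neighborSet v = {u, p, r, q} := by rw [hNv]; ext w; simp; tauto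
    have hNu' : G.neighborSet u = {v, p, r, q} := by rw [hNu]; ext w; simp; tauto
    exact subaux hd hc h8 hreg hNv' hNu' (Ne.symm hqr') hpq' hpr

lemma four_regular_absurd (hd : LocallyDirac G) (hc : G.Connected)
    (h8 : 8 ≤ Fintype.card V) (hreg : ∀ w : V, (G.neighborSet w).ncard = 4) : False := by
  haveI : Nonempty V := Fintype.card_pos_iff.1 (by omega)
  obtain ⟨v⟩ := ‹Nonempty V›
  obtain ⟨a, ha⟩ := one_of_ncard (by rw [hreg v]; omega : 1 ≤ (G.neighborSet v).ncard)
  have hva : G.Adj v a := ha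
  have hcod2 : (G.neighborSet v ∩ G.neighborSet a).ncard = 2 := by
    have hle := codeg_le_two hd hc h8 hreg hva
    have hkey : (G.neighborSet v).ncard ≤ 2 * (G.neighborSet v ∩ G.neighborSet a).ncard :=
      hd v a hva
    have h4 := hreg v
    omega
  obtain ⟨b, d, hbd, hBD⟩ := Set.ncard_eq_two.1 hcod2
  have hbm : b ∈ G.neighborSet v ∩ G.neighborSet a := by rw [hBD]; simp
  have hdm : d ∈ G.neighborSet v ∩ G.neighborSet a := by rw [hBD]; simp
  have hvb : G.Adj v b := hbm.1
  have hab : G.Adj a b := hbm.2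
  have hvd : G.Adj v d := hdm.1
  have had : G.Adj a d := hdm.2
  obtain ⟨c, hcne, hNv⟩ := exists_fourth (hreg v) (by simpa using hva)
    (by simpa using hvb) (by simpa using hvd) hab.ne had.ne hbd
  have hca : c ≠ a := by intro h; apply hcne; simp [h]
  have hcb : c ≠ b := by intro h; apply hcne; simp [h]
  have hcd' : c ≠ d := by intro h; apply hcne; simp [h]
  have hvc : G.Adj v c := by rw [← SimpleGraph.mem_neighborSet, hNv]; simp
  have hnac : ¬ G.Adj a c := by
    intro h
    have hmem : c ∈ G.neighborSet v ∩ G.neighborSet a := ⟨hvc, h⟩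
    rw [hBD] at hmem
    rcases hmem with h' | h' <;> simp_all
  -- c is adjacent to b and d
  have hcbd : G.Adj c b ∧ G.Adj c d := by
    have hle := codeg_le_two hd hc h8 hreg hvc
    have hkey : (G.neighborSet v).ncard ≤ 2 * (G.neighborSet v ∩ G.neighborSet c).ncard :=
      hd v c hvc
    have h4 := hreg v
    have hsub : G.neighborSet v ∩ G.neighborSet c ⊆ {b, d} := by
      rintro w ⟨hwv, hwc⟩
      have hwnc : w ≠ c := fun h => G.irrefl (h ▸ (hwc : G.Adj c w))
      have hwna : w ≠ a := by
        rintro rfl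
        exact hnac (hwc : G.Adj c w).symm
      rw [hNv] at hwv
      rcases hwv with rfl | rfl | rfl | rfl <;> tauto
    have heq : G.neighborSet v ∩ G.neighborSet c = {b, d} :=
      Set.eq_of_subset_of_ncard_le hsub (by rw [Set.ncard_pair hbd]; omega) (Set.toFinite _)
    have hb' : b ∈ G.neighborSet v ∩ G.neighborSet c := by rw [heq]; simp
    have hd' : d ∈ G.neighborSet v ∩ G.neighborSet c := by rw [heq]; simp
    exact ⟨hb'.2, hd'.2⟩
  have hcb2 : G.Adj c b := hcbd.1
  have hcd2 : G.Adj c d := hcbd.2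
  have hnbd : ¬ G.Adj b d := by
    intro h
    have hsub : ({a, c, d} : Set V) ⊆ G.neighborSet v ∩ G.neighborSet b := by
      rintro w (rfl | rfl | rfl)
      · exact ⟨hva, hab.symm⟩
      · exact ⟨hvc, hcb2.symm⟩
      · exact ⟨hvd, h⟩
    have h3 : 3 ≤ (G.neighborSet v ∩ G.neighborSet b).ncard := by
      have := Set.ncard_le_ncard hsub (Set.toFinite _)
      rwa [ncard3' (Ne.symm hca) had.ne hcd'] at this
    have := codeg_le_two hd hc h8 hreg hvb
    omega
  -- the fourth neighbor x of a
  obtain ⟨x, hxne, hNa⟩ := exists_fourth (hreg a) (by simpa using hva.symm)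
    (by simpa using hab) (by simpa using had) hvb.ne hvd.ne hbd
  have hxv : x ≠ v := by intro h; apply hxne; simp [h]
  have hxb : x ≠ b := by intro h; apply hxne; simp [h]
  have hxd : x ≠ d := by intro h; apply hxne; simp [h]
  have hax : G.Adj a x := by rw [← SimpleGraph.mem_neighborSet, hNa]; simp
  have hxa : x ≠ a := hax.ne'
  have hxc : x ≠ c := by
    intro h
    exact hnac (h ▸ hax)
  -- b ~ x
  have hbx : G.Adj b x := by
    have hle := codeg_le_two hd hc h8 hreg hab
    have hkey : (G.neighborSet a).ncard ≤ 2 * (G.neighborSet a ∩ G.neighborSet b).ncard :=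
      hd a b hab
    have h4 := hreg a
    obtain ⟨w1, hw1, w2, hw2, hww⟩ := two_of_ncard
      (by omega : 2 ≤ (G.neighborSet a ∩ G.neighborSet b).ncard)
    have hcases : ∀ w ∈ G.neighborSet a ∩ G.neighborSet b, w = v ∨ w = x := by
      rintro w ⟨hwa, hwb⟩
      have hwnb : w ≠ b := fun h => G.irrefl (h ▸ (hwb : G.Adj b w))
      have hwnd : w ≠ d := by
        rintro rfl
        exact hnbd hwb
      rw [hNa] at hwa
      rcases hwa with rfl | rfl | rfl | rfl <;> tauto
    have e1 := hcases w1 hw1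
    have e2 := hcases w2 hw2
    rcases e1 with rfl | rfl
    · rcases e2 with rfl | rfl
      · exact absurd rfl hww
      · exact (hw2.2 : G.Adj b w2).symm.symm
    · exact (hw1.2 : G.Adj b w1).symm.symm
  -- d ~ x
  have hdx : G.Adj d x := by
    have hle := codeg_le_two hd hc h8 hreg had
    have hkey : (G.neighborSet a).ncard ≤ 2 * (G.neighborSet a ∩ G.neighborSet d).ncard :=
      hd a d had
    have h4 := hreg a
    obtain ⟨w1, hw1, w2, hw2, hww⟩ := two_of_ncard
      (by omega : 2 ≤ (G.neighborSet a ∩ G.neighborSet d).ncard)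
    have hcases : ∀ w ∈ G.neighborSet a ∩ G.neighborSet d, w = v ∨ w = x := by
      rintro w ⟨hwa, hwd⟩
      have hwnd : w ≠ d := fun h => G.irrefl (h ▸ (hwd : G.Adj d w))
      have hwnb : w ≠ b := by
        rintro rfl
        exact hnbd (hwd : G.Adj d w).symm
      rw [hNa] at hwa
      rcases hwa with rfl | rfl | rfl | rfl <;> tauto
    have e1 := hcases w1 hw1
    have e2 := hcases w2 hw2
    rcases e1 with rfl | rfl
    · rcases e2 with rfl | rfl
      · exact absurd rfl hww
      · exact (hw2.2 : G.Adj d w2)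
    · exact (hw1.2 : G.Adj d w1)
  have hNb : G.neighborSet b = {v, a, c, x} :=
    eq_four (le_of_eq (hreg b)) hva.ne hvc.ne (Ne.symm hxv) (Ne.symm hca) (Ne.symm hxa)
      (Ne.symm hxc)
      (by simpa using hvb.symm) (by simpa using hab.symm)
      (by simpa using hcb2.symm) (by simpa using hbx)
  have hNd : G.neighborSet d = {v, a, c, x} :=
    eq_four (le_of_eq (hreg d)) hva.ne hvc.ne (Ne.symm hxv) (Ne.symm hca) (Ne.symm hxa)
      (Ne.symm hxc)
      (by simpa using hvd.symm) (by simpa using had.symm)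
      (by simpa using hcd2.symm) (by simpa using hdx)
  -- x ~ c
  have hxc2 : G.Adj x c := by
    have hle := codeg_le_two hd hc h8 hreg hbx
    have hkey : (G.neighborSet b).ncard ≤ 2 * (G.neighborSet b ∩ G.neighborSet x).ncard :=
      hd b x hbx
    have h4 := hreg b
    obtain ⟨w1, hw1, w2, hw2, hww⟩ := two_of_ncard
      (by omega : 2 ≤ (G.neighborSet b ∩ G.neighborSet x).ncard)
    have hnvx : ¬ G.Adj v x := by
      intro h
      have hmem : x ∈ G.neighborSet v := h
      rw [hNv] at hmem
      rcases hmem with h' | h' | h' | h' <;> simp_all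
    have hcases : ∀ w ∈ G.neighborSet b ∩ G.neighborSet x, w = a ∨ w = c := by
      rintro w ⟨hwb, hwx⟩
      have hwnx : w ≠ x := fun h => G.irrefl (h ▸ (hwx : G.Adj x w))
      have hwnv : w ≠ v := by
        rintro rfl
        exact hnvx (hwx : G.Adj x w).symm
      rw [hNb] at hwb
      rcases hwb with rfl | rfl | rfl | rfl <;> tauto
    have e1 := hcases w1 hw1
    have e2 := hcases w2 hw2
    rcases e1 with rfl | rfl
    · rcases e2 with rfl | rfl
      · exact absurd rfl hww
      · exact (hw2.2 : G.Adj x w2)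
    · exact (hw1.2 : G.Adj x w1)
  have hNx : G.neighborSet x = {a, b, d, c} :=
    eq_four (le_of_eq (hreg x)) hab.ne had.ne (Ne.symm hca) hbd (Ne.symm hcb)
      (Ne.symm hcd')
      (by simpa using hax.symm) (by simpa using hbx.symm)
      (by simpa using hdx.symm) (by simpa using hxc2)
  have hNc : G.neighborSet c = {v, b, d, x} :=
    eq_four (le_of_eq (hreg c)) hvb.ne hvd.ne (Ne.symm hxv) hbd (Ne.symm hxb)
      (Ne.symm hxd)
      (by simpa using hvc.symm) (by simpa using hcb2)
      (by simpa using hcd2) (by simpa using hxc2.symm)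
  -- closure
  have hcl : ∀ z ∈ ({v, a, b, c, d, x} : Set V), ∀ w, G.Adj z w →
      w ∈ ({v, a, b, c, d, x} : Set V) := by
    rintro z (rfl | rfl | rfl | rfl | rfl | rfl) w hw
    · have hm : w ∈ G.neighborSet z := hw
      rw [hNv] at hm; rcases hm with rfl | rfl | rfl | rfl <;> simp
    · have hm : w ∈ G.neighborSet z := hw
      rw [hNa] at hm; rcases hm with rfl | rfl | rfl | rfl <;> simp
    · have hm : w ∈ G.neighborSet z := hw
      rw [hNb] at hm; rcases hm with rfl | rfl | rfl | rfl <;> simp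
    · have hm : w ∈ G.neighborSet z := hw
      rw [hNc] at hm; rcases hm with rfl | rfl | rfl | rfl <;> simp
    · have hm : w ∈ G.neighborSet z := hw
      rw [hNd] at hm; rcases hm with rfl | rfl | rfl | rfl <;> simp
    · have hm : w ∈ G.neighborSet z := hw
      rw [hNx] at hm; rcases hm with rfl | rfl | rfl | rfl <;> simp
  have hcard := card_V_le hc ⟨v, by simp⟩ hcl
  have := ncard_le6 v a b c d x
  omega

end locdirac_aux

/-- Every (connected) locally Dirac graph of order `n ≥ 8` is non-planar. -/
theorem stmt5 {V : Type*} [Fintype V] (G : SimpleGraph V) (hc : G.Connected)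
    (hd : LocallyDirac G) (h8 : 8 ≤ Fintype.card V) :
    ¬ Planar G := by
  intro hP
  apply hP.1
  by_cases hbig : ∃ v, 5 ≤ (G.neighborSet v).ncard
  · obtain ⟨v, hv⟩ := hbig
    exact k5_of_deg5 hd hv
  · push_neg at hbig
    have hreg : ∀ w, (G.neighborSet w).ncard = 4 := by
      intro w
      have h1 := deg_ge_four hd hc h8 w
      have h2 := hbig w
      omega
    exact (four_regular_absurd hd hc h8 hreg).elim
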